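/- Let H be a bialgebra over a commutative ring R, n a natural number, and t^1, …, t^n : H → R R-linear functionals. Define d' : H → H^n by (d' a)_k = t^k_R(a) = Σ t^k(a_(1)) a_(2), the left H-action on H^n by (a • v)_k = a · v_k, and the right coaction Δ_R : H^n → (H ⊗ H)^n componentwise by (Δ_R v)_k = Δ(v_k). Then for all a, b ∈ H: Δ_R(a • d' b) = Δ(a) · ( Σ d'(b_(1)) ⊗ b_(2) ), meaning componentwise (Δ_R(a • d' b))_k = Δ(a) · (Σ t^k_R(b_(1)) ⊗ b_(2)). This is the right covariance of the first-order differential calculus expressed in the right-invariant basis (Proposition 5(ii)). -/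
import Mathlib


open TensorProduct

/-- The right-invariant vector field `t_R(a) = Σ t(a_(1)) a_(2)`. -/
noncomputable def tR (R C : Type*) [CommRing R] [AddCommGroup C] [Module R C]
    [Coalgebra R C] (t : C →ₗ[R] R) : C →ₗ[R] C :=
  (TensorProduct.lid R C).toLinearMap ∘ₗ (LinearMap.rTensor C t) ∘ₗ Coalgebra.comul

/-- Key coassociativity consequence: `Δ(t_R b) = (t_R ⊗ 1)(Δ b)`. -/
lemma comul_tR (R H : Type*) [CommRing R] [AddCommGroup H] [Module R H] [Coalgebra R H]
    (t : H →ₗ[R] R) (b : H) :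
    Coalgebra.comul (R := R) (tR R H t b) =
      LinearMap.rTensor H (tR R H t) (Coalgebra.comul (R := R) b) := by
  have main : ∀ y : H ⊗[R] H,
      Coalgebra.comul (R := R) ((TensorProduct.lid R H) (LinearMap.rTensor H t y)) =
      LinearMap.rTensor H ((TensorProduct.lid R H).toLinearMap ∘ₗ LinearMap.rTensor H t)
        ((TensorProduct.assoc R H H H).symm (LinearMap.lTensor H Coalgebra.comul y)) := by
    intro y
    induction y using TensorProduct.induction_on with
    | zero => simp
    | add u v hu hv => simp only [map_add, hu, hv]
    | tmul c d =>
      simp only [LinearMap.rTensor_tmul, LinearMap.lTensor_tmul, lid_tmul, map_smul]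
      generalize Coalgebra.comul (R := R) d = z
      induction z using TensorProduct.induction_on with
      | zero => simp
      | add u v hu hv => simp only [smul_add, tmul_add, map_add, hu, hv]
      | tmul u v => simp [smul_tmul']
  have h := main (Coalgebra.comul (R := R) b)
  rw [Coalgebra.coassoc_symm_apply] at h
  simpa only [tR, LinearMap.rTensor_comp, LinearMap.comp_apply, LinearEquiv.coe_coe] using h

/-- right covariance of the first-order differential calculus
`d' a = (t^1_R a, …, t^n_R a)` in the right-invariant basis: componentwise,
`Δ_R(a • d' b)_k = Δ(a * t^k_R b) = Δ(a) · (Σ t^k_R(b_(1)) ⊗ b_(2))`. -/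
theorem right_covariance (R H : Type*) [CommRing R] [Ring H] [Bialgebra R H]
    {n : ℕ} (t : Fin n → (H →ₗ[R] R)) :
    ∀ (a b : H) (k : Fin n),
      Coalgebra.comul (R := R) (a * tR R H (t k) b) =
        Coalgebra.comul (R := R) a *
          (LinearMap.rTensor H (tR R H (t k)) (Coalgebra.comul (R := R) b)) := by
  intro a b k
  rw [Bialgebra.comul_mul, comul_tR]
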